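/- Let S be a semigroup and a, b ∈ S group elements with a ∼ₚ b. Then there exist x, y ∈ S such that a = xy, b = yx, with x ∈ R_a ∩ L_b and y ∈ R_b ∩ L_a. -/
import Mathlib


variable {S : Type*} [Semigroup S]

/-- Primary conjugacy: `a = x*y` and `b = y*x` for some `x, y`. -/
def PConj (a b : S) : Prop := ∃ x y : S, a = x * y ∧ b = y * x

/-- Conjugacy: the transitive closure of primary conjugacy. -/
def SConj : S → S → Prop := Relation.TransGen PConj

/-- `pw a n` is `a ^ n` for `n ≥ 1` (with junk value `a` at `n = 0`). -/
def pw (a : S) : ℕ → S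
  | 0 => a
  | 1 => a
  | n + 2 => pw a (n + 1) * a

/-- An element is a group element iff it lies in some subgroup of `S`:
there is an idempotent `e` acting as identity on `a`, and an inverse of `a`
relative to `e`. -/
def IsGroupElement (a : S) : Prop :=
  ∃ e b : S, e * e = e ∧ e * a = a ∧ a * e = a ∧ a * b = e ∧ b * a = e

/-- An element is group-bound if some positive power is a group element. -/
def GroupBound (a : S) : Prop := ∃ n : ℕ, 1 ≤ n ∧ IsGroupElement (pw a n)

/-- Green's L-relation: same principal left ideal in `S¹`. -/
def LRel (a b : S) : Prop :=
  (∃ u : WithOne S, u * (a : WithOne S) = (b : WithOne S)) ∧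
  (∃ u : WithOne S, u * (b : WithOne S) = (a : WithOne S))

/-- Green's R-relation: same principal right ideal in `S¹`. -/
def RRel (a b : S) : Prop :=
  (∃ u : WithOne S, (a : WithOne S) * u = (b : WithOne S)) ∧
  (∃ u : WithOne S, (b : WithOne S) * u = (a : WithOne S))

/-- Green's H-relation. -/
def HRel (a b : S) : Prop := LRel a b ∧ RRel a b

/-- Green's D-relation. -/
def DRel (a b : S) : Prop := ∃ c : S, LRel a c ∧ RRel c b


private lemma key_sft (s t a b e ai f bi : S)
    (hab : a = s * t) (hba : b = t * s)
    (hea : e * a = a) (haia : ai * a = e)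
    (hfb : f * b = b) (hbbi : b * bi = f) (hbib : bi * b = f) :
    s * (f * t) = a := by
  have h1 : a * (s * (bi * t)) = s * (f * t) := by
    rw [← hbbi, hab, hba]; simp only [mul_assoc]
  have h2 : (s * (bi * t)) * a = s * (f * t) := by
    rw [← hbib, hab, hba]; simp only [mul_assoc]
  have h3 : (s * (f * t)) * a = a * a := by
    calc (s * (f * t)) * a = s * ((f * b) * t) := by
          rw [hab, hba]; simp only [mul_assoc]
      _ = s * (b * t) := by rw [hfb]
      _ = a * a := by rw [hab, hba]; simp only [mul_assoc]
  have hca : a * (s * (bi * t)) = (s * (bi * t)) * a := h1.trans h2.symm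
  have had : a * (s * (f * t)) = a * a := by
    rw [← h1, hca, ← mul_assoc, h1, h3]
  calc s * (f * t) = e * (s * (f * t)) := by rw [← h1, ← mul_assoc e a, hea]
    _ = (ai * a) * (s * (f * t)) := by rw [haia]
    _ = ai * (a * (s * (f * t))) := mul_assoc _ _ _
    _ = ai * (a * a) := by rw [had]
    _ = (ai * a) * a := (mul_assoc _ _ _).symm
    _ = a := by rw [haia, hea]

theorem pconj_group_elements_factorization (a b : S)
    (ha : IsGroupElement a) (hb : IsGroupElement b) (h : PConj a b) :
    ∃ x y : S, a = x * y ∧ b = y * x ∧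
      RRel x a ∧ LRel x b ∧ RRel y b ∧ LRel y a := by
  obtain ⟨s, t, hab, hba⟩ := h
  obtain ⟨e, ai, hee, hea, hae, haai, haia⟩ := ha
  obtain ⟨f, bi, hff, hfb, hbf, hbbi, hbib⟩ := hb
  have hsft : s * (f * t) = a := key_sft s t a b e ai f bi hab hba hea haia hfb hbbi hbib
  have htes : t * (e * s) = b := key_sft t s b a f bi e ai hba hab hfb hbib hea haai haia
  have hx : a = (e * (s * f)) * (f * (t * e)) := by
    calc a = e * (a * e) := by rw [hae, hea]
      _ = e * ((s * (f * t)) * e) := by rw [hsft]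
      _ = e * (s * ((f * f) * (t * e))) := by rw [hff]; simp only [mul_assoc]
      _ = (e * (s * f)) * (f * (t * e)) := by simp only [mul_assoc]
  have hy : b = (f * (t * e)) * (e * (s * f)) := by
    calc b = f * (b * f) := by rw [hbf, hfb]
      _ = f * ((t * (e * s)) * f) := by rw [htes]
      _ = f * (t * ((e * e) * (s * f))) := by rw [hee]; simp only [mul_assoc]
      _ = (f * (t * e)) * (e * (s * f)) := by simp only [mul_assoc]
  refine ⟨e * (s * f), f * (t * e), hx, hy, ?_, ?_, ?_, ?_⟩
  · exact ⟨⟨(f * (t * e) : S), by rw [← WithOne.coe_mul]; exact congrArg _ hx.symm⟩,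
      ⟨(ai * (s * f) : S), by rw [← WithOne.coe_mul]; exact congrArg _ (by
        rw [← mul_assoc, haai])⟩⟩
  · exact ⟨⟨(f * (t * e) : S), by rw [← WithOne.coe_mul]; exact congrArg _ hy.symm⟩,
      ⟨(e * (s * bi) : S), by rw [← WithOne.coe_mul]; exact congrArg _ (by
        simp only [mul_assoc]; rw [hbib])⟩⟩
  · exact ⟨⟨(e * (s * f) : S), by rw [← WithOne.coe_mul]; exact congrArg _ hy.symm⟩,
      ⟨(bi * (t * e) : S), by rw [← WithOne.coe_mul]; exact congrArg _ (by
        rw [← mul_assoc, hbbi])⟩⟩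
  · exact ⟨⟨(e * (s * f) : S), by rw [← WithOne.coe_mul]; exact congrArg _ hx.symm⟩,
      ⟨(f * (t * ai) : S), by rw [← WithOne.coe_mul]; exact congrArg _ (by
        simp only [mul_assoc]; rw [haia])⟩⟩
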